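/- Let O be a finite set, μ_* a full-support probability distribution on O that minimizes the squared Hellinger distance to a full-support distribution ξ within a closed convex set Ψ, and let θ ∈ Ψ. Then E_{o∼θ}[sqrt(ξ(o)/μ_*(o))] ≤ 1 − D²_H(μ_*, ξ) + D²_H(μ_*, ξ)·0 ≤ 1, and consequently −ln(E_{o∼θ}[sqrt(ξ(o)/μ_*(o))]) ≥ D²_H(μ_*, ξ). -/

import Mathlib

/-- Squared Hellinger distance between distributions on a finite set. -/
noncomputable def sqH {O : Type*} [Fintype O] (μ ν : O → ℝ) : ℝ :=
  1 - ∑ o, Real.sqrt (μ o * ν o)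

/-- If μ_* is a full-support Hellinger projection of the full-support
distribution ξ onto the closed convex set Ψ, and θ ∈ Ψ, then
E_{o∼θ}[√(ξ(o)/μ_*(o))] ≤ 1 − D²_H(μ_*, ξ) ≤ 1, and consequently
−ln(E_{o∼θ}[√(ξ(o)/μ_*(o))]) ≥ D²_H(μ_*, ξ). -/
theorem stmt9 {O : Type*} [Fintype O] (Ψ : Set (O → ℝ))
    (hne : Ψ.Nonempty) (hcl : IsClosed Ψ) (hconv : Convex ℝ Ψ)
    (hsub : ∀ q ∈ Ψ, (∀ o, 0 ≤ q o) ∧ ∑ o, q o = 1)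
    (ξ : O → ℝ) (hξ : (∀ o, 0 < ξ o) ∧ ∑ o, ξ o = 1)
    (μs : O → ℝ) (hμΨ : μs ∈ Ψ) (hμfull : ∀ o, 0 < μs o)
    (hmin : ∀ μ' ∈ Ψ, sqH μs ξ ≤ sqH μ' ξ)
    (θ : O → ℝ) (hθ : θ ∈ Ψ) :
    (∑ o, θ o * Real.sqrt (ξ o / μs o)) ≤ 1 - sqH μs ξ ∧
    (∑ o, θ o * Real.sqrt (ξ o / μs o)) ≤ 1 ∧
    sqH μs ξ ≤ -Real.log (∑ o, θ o * Real.sqrt (ξ o / μs o)) := by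
  obtain ⟨hξpos, hξsum⟩ := hξ
  obtain ⟨hθnn, hθsum⟩ := hsub θ hθ
  obtain ⟨hμnn, hμsum⟩ := hsub μs hμΨ
  set S : ℝ := ∑ o, θ o * Real.sqrt (ξ o / μs o) with hS
  -- algebra: μs o * sqrt(ξ/μs) = sqrt(μs * ξ)
  have key1 : ∀ o, μs o * Real.sqrt (ξ o / μs o) = Real.sqrt (μs o * ξ o) := by
    intro o
    rw [Real.sqrt_div (hξpos o).le, Real.sqrt_mul (hμfull o).le]
    have h : (0:ℝ) < Real.sqrt (μs o) := Real.sqrt_pos.mpr (hμfull o)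
    have hms : Real.sqrt (μs o) * Real.sqrt (μs o) = μs o := Real.mul_self_sqrt (hμfull o).le
    field_simp
    linear_combination (- Real.sqrt (ξ o)) * hms
  -- algebra: ξ o / (2 * sqrt(μs*ξ)) = sqrt(ξ/μs) / 2
  have key2 : ∀ o, ξ o / (2 * Real.sqrt (μs o * ξ o)) = Real.sqrt (ξ o / μs o) / 2 := by
    intro o
    rw [Real.sqrt_div (hξpos o).le, Real.sqrt_mul (hμfull o).le]
    have h1 : (0:ℝ) < Real.sqrt (μs o) := Real.sqrt_pos.mpr (hμfull o)
    have h2 : (0:ℝ) < Real.sqrt (ξ o) := Real.sqrt_pos.mpr (hξpos o)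
    have h3 : Real.sqrt (ξ o) * Real.sqrt (ξ o) = ξ o := Real.mul_self_sqrt (hξpos o).le
    field_simp
    nlinarith [h3]
  -- the function g
  set g : ℝ → ℝ := fun t => ∑ o, Real.sqrt ((μs o + t * (θ o - μs o)) * ξ o) with hg
  -- derivative of g at 0
  set D : ℝ := ∑ o, (θ o - μs o) * ξ o / (2 * Real.sqrt (μs o * ξ o)) with hD
  have hderiv : HasDerivAt g D 0 := by
    rw [hg, hD]
    apply HasDerivAt.fun_sum
    intro o _
    have h1 : HasDerivAt (fun t : ℝ => (μs o + t * (θ o - μs o)) * ξ o)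
        ((θ o - μs o) * ξ o) 0 := by
      have := (((hasDerivAt_id (0:ℝ)).mul_const (θ o - μs o)).const_add (μs o)).mul_const (ξ o)
      simpa using this
    have h2 := h1.sqrt (by
      have : (μs o + 0 * (θ o - μs o)) * ξ o = μs o * ξ o := by ring
      rw [this]; exact (mul_pos (hμfull o) (hξpos o)).ne')
    simpa [div_eq_mul_inv] using h2
  -- g t ≤ g 0 for t ∈ (0,1]
  have hle : ∀ t ∈ Set.Ioc (0:ℝ) 1, g t ≤ g 0 := by
    intro t ht
    have hmem : (fun o => μs o + t * (θ o - μs o)) ∈ Ψ := by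
      have := hconv hμΨ hθ (by linarith [ht.1.le, ht.2] : (0:ℝ) ≤ 1 - t) ht.1.le (by ring)
      convert this using 1
      funext o
      simp [Pi.add_apply, Pi.smul_apply, smul_eq_mul]
      ring
    have := hmin _ hmem
    simp only [sqH, hg] at this ⊢
    have h0 : ∀ o, (μs o + 0 * (θ o - μs o)) * ξ o = μs o * ξ o := fun o => by ring
    simp only [h0]
    linarith [this]
  -- D ≤ 0 via slope
  have hD0 : D ≤ 0 := by
    have hslope : Filter.Tendsto (slope g 0) (nhdsWithin 0 (Set.Ioi 0)) (nhds D) := by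
      apply (hasDerivAt_iff_tendsto_slope.mp hderiv).mono_left
      apply nhdsWithin_mono
      intro x hx
      exact Set.mem_compl_singleton_iff.mpr (ne_of_gt hx)
    refine le_of_tendsto hslope ?_
    filter_upwards [Ioc_mem_nhdsGT_of_mem (Set.mem_Ico.mpr ⟨le_refl 0, one_pos⟩)] with t ht
    have h1 := hle t ht
    have ht0 : 0 < t := ht.1
    rw [slope_def_field]
    have : (g t - g 0) / (t - 0) ≤ 0 := by
      apply div_nonpos_of_nonpos_of_nonneg <;> linarith
    simpa [div_eq_mul_inv] using this
  -- translate D into the sums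
  have hDeq : D = (S - ∑ o, Real.sqrt (μs o * ξ o)) / 2 := by
    rw [hD, hS]
    rw [← Finset.sum_sub_distrib, Finset.sum_div]
    apply Finset.sum_congr rfl
    intro o _
    rw [mul_div_assoc, key2 o, ← key1 o]
    ring
  -- first inequality
  have hsum_eq : 1 - sqH μs ξ = ∑ o, Real.sqrt (μs o * ξ o) := by simp [sqH]
  have h1 : S ≤ 1 - sqH μs ξ := by
    rw [hsum_eq]
    nlinarith [hD0, hDeq]
  -- sqrt(μs ξ) sum ≤ 1 (AM-GM)
  have hsqH_nn : 0 ≤ sqH μs ξ := by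
    have : ∑ o, Real.sqrt (μs o * ξ o) ≤ 1 := by
      calc ∑ o, Real.sqrt (μs o * ξ o) ≤ ∑ o, (μs o + ξ o) / 2 := by
            apply Finset.sum_le_sum
            intro o _
            nlinarith [sq_nonneg (Real.sqrt (μs o) - Real.sqrt (ξ o)),
              Real.sq_sqrt (hμnn o), Real.sq_sqrt (hξpos o).le,
              Real.sqrt_mul (hμnn o) (ξ o), Real.sqrt_nonneg (μs o), Real.sqrt_nonneg (ξ o)]
        _ = 1 := by rw [← Finset.sum_div, Finset.sum_add_distrib, hμsum, hξsum]; norm_num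
    simp [sqH]; linarith
  have h2 : S ≤ 1 := by linarith
  -- S > 0
  have hSpos : 0 < S := by
    have : ∃ o, 0 < θ o := by
      by_contra h
      push_neg at h
      have : ∑ o, θ o ≤ 0 := Finset.sum_nonpos (fun o _ => h o)
      linarith
    obtain ⟨o, ho⟩ := this
    have : 0 < θ o * Real.sqrt (ξ o / μs o) := by
      apply mul_pos ho
      exact Real.sqrt_pos.mpr (div_pos (hξpos o) (hμfull o))
    rw [hS]
    exact Finset.sum_pos' (fun i _ => mul_nonneg (hθnn i) (Real.sqrt_nonneg _))
      ⟨o, Finset.mem_univ o, this⟩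
  -- log part
  have h3 : sqH μs ξ ≤ -Real.log S := by
    have hlog : Real.log S ≤ S - 1 := Real.log_le_sub_one_of_pos hSpos
    linarith
  exact ⟨h1, h2, h3⟩
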